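/- Let F be ℝ or ℂ, p, q ≥ 1, row block sizes n₁,…,n_p ≥ 1 and column block sizes m₁,…,m_q ≥ 1 with n = Σ n_i and m = Σ m_j, degree bounds g_{ij} ∈ ℕ, and d ∈ ℕ. Identify 𝔉 = ∏_{(i,j)} (F^{n_i×m_j})^{g_{ij}+1} with F^G, where G = Σ_{(i,j)} n_i m_j (g_{ij}+1). For P ∈ 𝔉 let P̂(x) ∈ F[x]^{n×m} be the polynomial block matrix whose (i,j) block is Σ_{k=0}^{g_{ij}} P_k^{ij} x^k. Then the set {P ∈ 𝔉 : rk_{F(x)} P̂(x) < d}, where the rank is taken over the field F(x) of rational functions, is a proper algebraic variety if, and only if, d ≤ min{n, m}. Equivalently, {P ∈ 𝔉 : rk_{F(x)} P̂(x) ≥ d} is generic if, and only if, d ≤ min{n, m}. -/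

import Mathlib

/-- A set `V ⊆ F^N` is an algebraic variety if it is the common zero locus of
finitely many polynomials. -/
def IsAlgVariety {ι F : Type} [CommRing F] (V : Set (ι → F)) : Prop :=
  ∃ (k : ℕ) (p : Fin k → MvPolynomial ι F),
    V = {x | ∀ i, MvPolynomial.eval x (p i) = 0}

/-- A proper algebraic variety is an algebraic variety strictly contained in `F^N`. -/
def IsProperAlgVariety {ι F : Type} [CommRing F] (V : Set (ι → F)) : Prop :=
  IsAlgVariety V ∧ V ≠ Set.univ

/-- A set `S ⊆ F^N` is generic if its complement is contained in a proper
algebraic variety. -/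
def IsGeneric {ι F : Type} [CommRing F] (S : Set (ι → F)) : Prop :=
  ∃ V : Set (ι → F), IsAlgVariety V ∧ V ≠ Set.univ ∧ Sᶜ ⊆ V

/-- The assembled `n × m` polynomial block matrix `P̂(x)` of a tuple of coefficient blocks
`P_k^{ij} ∈ F^{n_i × m_j}` (`0 ≤ k ≤ g_{ij}`): its `(i,j)` block is `Σ_k P_k^{ij} x^k`.
The tuple is encoded as a point of the coordinate space
`((i,j) : Fin p × Fin q) × (Fin (g i j + 1) × Fin (n_i) × Fin (m_j)) → F`. -/
noncomputable def polyBlock {F : Type} [CommRing F] {p q : ℕ}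
    (ns : Fin p → ℕ) (ms : Fin q → ℕ) (g : Fin p → Fin q → ℕ)
    (x : ((ij : Fin p × Fin q) ×
      (Fin (g ij.1 ij.2 + 1) × Fin (ns ij.1) × Fin (ms ij.2))) → F) :
    Matrix ((i : Fin p) × Fin (ns i)) ((j : Fin q) × Fin (ms j)) (Polynomial F) :=
  Matrix.of fun r c =>
    ∑ k : Fin (g r.1 c.1 + 1),
      Polynomial.C (x ⟨(r.1, c.1), (k, r.2, c.2)⟩) * Polynomial.X ^ (k : ℕ)


open Matrix Module Submodule

namespace Stmt10Aux

variable {K : Type*} [Field K] {R C : Type*} [Fintype R] [Fintype C]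
  [DecidableEq R] [DecidableEq C] {d : ℕ}

lemma sub_eq_mul (M : Matrix R C K) (f : Fin d → R) (g : Fin d → C) :
    M.submatrix f g =
      ((1 : Matrix R R K).submatrix f id) * M * ((1 : Matrix C C K).submatrix id g) := by
  ext s t
  simp [Matrix.mul_apply, Matrix.one_apply, Finset.sum_ite_eq, Finset.sum_ite_eq',
    mul_ite, ite_mul, Matrix.submatrix_apply]

lemma my_rank_submatrix_le (M : Matrix R C K) (f : Fin d → R) (g : Fin d → C) :
    (M.submatrix f g).rank ≤ M.rank := by
  rw [sub_eq_mul M f g]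
  exact le_trans (Matrix.rank_mul_le_left _ _) (Matrix.rank_mul_le_right _ _)

omit [DecidableEq R] [DecidableEq C] in
lemma exists_cols (M : Matrix R C K) (h : d ≤ M.rank) :
    ∃ g : Fin d → C, (M.submatrix id g).rank = d := by
  classical
  rw [Matrix.rank_eq_finrank_span_cols] at h
  obtain ⟨b, hbs, hspan, hbi⟩ := exists_linearIndependent K (Set.range Mᵀ)
  have hbfin : b.Finite := hbi.setFinite
  haveI : Fintype b := hbfin.fintype
  have hcard : d ≤ Fintype.card b := by
    have := finrank_span_set_eq_card hbi
    rw [hspan] at this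
    rw [← Set.toFinset_card, ← this]
    exact h
  obtain ⟨e⟩ : Nonempty (Fin d ↪ b) := Function.Embedding.nonempty_of_card_le
    (by simpa using hcard)
  have hmem : ∀ t : Fin d, ((e t : b) : R → K) ∈ Set.range Mᵀ := fun t => hbs (e t).2
  choose g hg using hmem
  refine ⟨g, ?_⟩
  have hcolind : LinearIndependent K ((M.submatrix id g)ᵀ) := by
    have : (M.submatrix id g)ᵀ = fun t => ((e t : b) : R → K) := by
      funext t; rw [← hg t]; rfl
    rw [this]
    exact hbi.comp e e.injective
  rw [Matrix.rank_eq_finrank_span_cols]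
  exact (finrank_span_eq_card hcolind).trans (Fintype.card_fin d)

lemma det_ne_zero_of_rank_eq (N : Matrix (Fin d) (Fin d) K) (h : N.rank = d) :
    N.det ≠ 0 := by
  intro hdet
  obtain ⟨v, hv0, hv⟩ := (Matrix.exists_mulVec_eq_zero_iff).2 hdet
  have hker : 0 < finrank K (LinearMap.ker N.mulVecLin) := by
    rw [finrank_pos_iff]
    refine ⟨⟨⟨v, by simpa [Matrix.mulVecLin] using hv⟩, 0, ?_⟩⟩
    intro hz
    exact hv0 (congrArg Subtype.val hz)
  have h2 := LinearMap.finrank_range_add_finrank_ker N.mulVecLin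
  rw [show finrank K (Fin d → K) = d by simp] at h2
  rw [Matrix.rank] at h
  omega

lemma rank_ge_iff_exists_det (M : Matrix R C K) :
    d ≤ M.rank ↔ ∃ (f : Fin d → R) (g : Fin d → C), (M.submatrix f g).det ≠ 0 := by
  constructor
  · intro h
    obtain ⟨g, hg⟩ := exists_cols M h
    have h2 : d ≤ (M.submatrix id g)ᵀ.rank := by rw [Matrix.rank_transpose, hg]
    obtain ⟨f, hf⟩ := exists_cols _ h2
    refine ⟨f, g, ?_⟩
    apply det_ne_zero_of_rank_eq
    have : ((M.submatrix id g)ᵀ.submatrix id f) = (M.submatrix f g)ᵀ := by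
      ext s t; rfl
    rw [this, Matrix.rank_transpose] at hf
    exact hf
  · rintro ⟨f, g, hdet⟩
    have h1 : (M.submatrix f g).rank = d := by
      rw [Matrix.rank_of_isUnit _ ((Matrix.isUnit_iff_isUnit_det _).2 hdet.isUnit),
        Fintype.card_fin]
    rw [← h1]
    exact my_rank_submatrix_le M f g

lemma isAlgVariety_aux {ι F J : Type} [CommRing F] [Fintype J]
    (P : J → MvPolynomial ι F) :
    ∃ (k : ℕ) (p : Fin k → MvPolynomial ι F),
      {x : ι → F | ∀ j, MvPolynomial.eval x (P j) = 0}
        = {x | ∀ i, MvPolynomial.eval x (p i) = 0} := by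
  refine ⟨Fintype.card J, fun i => P ((Fintype.equivFin J).symm i), ?_⟩
  ext x
  simp only [Set.mem_setOf_eq]
  exact ⟨fun h i => h _, fun h j => by simpa using h (Fintype.equivFin J j)⟩

lemma polymap_eq_zero_iff {A B : Type*} [CommRing A] [CommRing B] (φ : A →+* B)
    (D : Polynomial A) :
    D.map φ = 0 ↔ ∀ c : Fin (D.natDegree + 1), φ (D.coeff (c : ℕ)) = 0 := by
  constructor
  · intro h c
    rw [← Polynomial.coeff_map, h, Polynomial.coeff_zero]
  · intro h
    ext n
    rw [Polynomial.coeff_map, Polynomial.coeff_zero]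
    by_cases hn : n ≤ D.natDegree
    · exact h ⟨n, by omega⟩
    · rw [Polynomial.coeff_eq_zero_of_natDegree_lt (by omega), map_zero]

lemma det_map_hom {R S n : Type*} [CommRing R] [CommRing S] [Fintype n] [DecidableEq n]
    (f : R →+* S) (M : Matrix n n R) : (M.map f).det = f M.det := by
  rw [RingHom.map_det]; rfl

end Stmt10Aux



section genmat

variable {F : Type} [Field F] {p q : ℕ}
  (ns : Fin p → ℕ) (ms : Fin q → ℕ) (g : Fin p → Fin q → ℕ)

noncomputable def genMat :
    Matrix ((i : Fin p) × Fin (ns i)) ((j : Fin q) × Fin (ms j))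
      (Polynomial (MvPolynomial ((ij : Fin p × Fin q) ×
        (Fin (g ij.1 ij.2 + 1) × Fin (ns ij.1) × Fin (ms ij.2))) F)) :=
  Matrix.of fun r c =>
    ∑ k : Fin (g r.1 c.1 + 1),
      Polynomial.C (MvPolynomial.X ⟨(r.1, c.1), (k, r.2, c.2)⟩) * Polynomial.X ^ (k : ℕ)

lemma polyBlock_eq_map (x : ((ij : Fin p × Fin q) ×
      (Fin (g ij.1 ij.2 + 1) × Fin (ns ij.1) × Fin (ms ij.2))) → F) :
    polyBlock ns ms g x
      = (genMat ns ms g).map (Polynomial.map (MvPolynomial.eval x)) := by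
  ext r c
  simp [polyBlock, genMat, Polynomial.map_sum]

lemma det_eval {d : ℕ} (x : ((ij : Fin p × Fin q) ×
      (Fin (g ij.1 ij.2 + 1) × Fin (ns ij.1) × Fin (ms ij.2))) → F)
    (f : Fin d → ((i : Fin p) × Fin (ns i))) (g' : Fin d → ((j : Fin q) × Fin (ms j))) :
    ((polyBlock ns ms g x).submatrix f g').det
      = Polynomial.map (MvPolynomial.eval x) ((genMat ns ms g).submatrix f g').det := by
  rw [polyBlock_eq_map ns ms g x, Matrix.submatrix_map]
  exact (RingHom.map_det (Polynomial.mapRingHom (MvPolynomial.eval x)) _).symm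

lemma detsub_zero_iff {d : ℕ} (x : ((ij : Fin p × Fin q) ×
      (Fin (g ij.1 ij.2 + 1) × Fin (ns ij.1) × Fin (ms ij.2))) → F)
    (f : Fin d → ((i : Fin p) × Fin (ns i))) (g' : Fin d → ((j : Fin q) × Fin (ms j))) :
    (((polyBlock ns ms g x).map
        (algebraMap (Polynomial F) (RatFunc F))).submatrix f g').det = 0
    ↔ ∀ c : Fin ((((genMat (F := F) ns ms g).submatrix f g').det.natDegree) + 1),
        MvPolynomial.eval x
          (((genMat (F := F) ns ms g).submatrix f g').det.coeff (c : ℕ)) = 0 := by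
  classical
  rw [Matrix.submatrix_map, Stmt10Aux.det_map_hom,
    map_eq_zero_iff _ (RatFunc.algebraMap_injective F),
    det_eval ns ms g x f g', Stmt10Aux.polymap_eq_zero_iff]

lemma variety_rank_lt (d : ℕ) :
    IsAlgVariety {x : ((ij : Fin p × Fin q) ×
        (Fin (g ij.1 ij.2 + 1) × Fin (ns ij.1) × Fin (ms ij.2))) → F |
      ((polyBlock ns ms g x).map (algebraMap (Polynomial F) (RatFunc F))).rank < d} := by
  classical
  set Rt := ((i : Fin p) × Fin (ns i))
  set Ct := ((j : Fin q) × Fin (ms j))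
  have key : ∀ x, (((polyBlock ns ms g x).map (algebraMap _ (RatFunc F))).rank < d)
      ↔ ∀ j : ((fg : (Fin d → Rt) × (Fin d → Ct)) ×
            Fin ((((genMat (F := F) ns ms g).submatrix fg.1 fg.2).det.natDegree) + 1)),
          MvPolynomial.eval x
            (((genMat (F := F) ns ms g).submatrix j.1.1 j.1.2).det.coeff ((j.2 : ℕ))) = 0 := by
    intro x
    rw [← not_le, Stmt10Aux.rank_ge_iff_exists_det]
    push_neg
    rw [Sigma.forall]
    constructor
    · rintro h ⟨f, g'⟩ c
      exact (detsub_zero_iff ns ms g x f g').mp (h f g') c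
    · rintro h f g'
      exact (detsub_zero_iff ns ms g x f g').mpr (fun c => h ⟨f, g'⟩ c)
  obtain ⟨k, ps, hps⟩ := Stmt10Aux.isAlgVariety_aux
    (fun j : ((fg : (Fin d → Rt) × (Fin d → Ct)) ×
        Fin ((((genMat (F := F) ns ms g).submatrix fg.1 fg.2).det.natDegree) + 1)) =>
      ((genMat (F := F) ns ms g).submatrix j.1.1 j.1.2).det.coeff ((j.2 : ℕ)))
  refine ⟨k, ps, ?_⟩
  rw [← hps]
  ext x
  simp only [Set.mem_setOf_eq]
  exact key x

lemma witness_exists {d : ℕ} (hn : d ≤ Fintype.card ((i : Fin p) × Fin (ns i)))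
    (hm : d ≤ Fintype.card ((j : Fin q) × Fin (ms j))) :
    ∃ x : ((ij : Fin p × Fin q) ×
        (Fin (g ij.1 ij.2 + 1) × Fin (ns ij.1) × Fin (ms ij.2))) → F,
      d ≤ ((polyBlock ns ms g x).map (algebraMap (Polynomial F) (RatFunc F))).rank := by
  classical
  obtain ⟨u⟩ : Nonempty (Fin d ↪ ((i : Fin p) × Fin (ns i))) :=
    Function.Embedding.nonempty_of_card_le (by simpa using hn)
  obtain ⟨w⟩ : Nonempty (Fin d ↪ ((j : Fin q) × Fin (ms j))) :=
    Function.Embedding.nonempty_of_card_le (by simpa using hm)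
  set x : ((ij : Fin p × Fin q) ×
      (Fin (g ij.1 ij.2 + 1) × Fin (ns ij.1) × Fin (ms ij.2))) → F :=
    fun v => if (v.2.1 : ℕ) = 0 ∧
        ∃ t : Fin d, u t = ⟨v.1.1, v.2.2.1⟩ ∧ w t = ⟨v.1.2, v.2.2.2⟩ then 1 else 0 with hx
  refine ⟨x, ?_⟩
  rw [Stmt10Aux.rank_ge_iff_exists_det]
  refine ⟨u, w, ?_⟩
  have hsub : (polyBlock ns ms g x).submatrix u w
      = (1 : Matrix (Fin d) (Fin d) (Polynomial F)) := by
    ext s t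
    simp only [Matrix.submatrix_apply, polyBlock, Matrix.of_apply, Matrix.one_apply, hx]
    rw [Finset.sum_eq_single (0 : Fin (g (u s).1 (w t).1 + 1))]
    · simp only [Fin.val_zero, pow_zero, mul_one]
      by_cases hst : s = t
      · subst hst
        rw [if_pos ⟨by simp, ⟨s, rfl, rfl⟩⟩, if_pos rfl, Polynomial.C_1]
      · rw [if_neg, if_neg hst, Polynomial.C_0]
        rintro ⟨-, t', h1, h2⟩
        exact hst ((u.injective h1).symm.trans (w.injective h2))
    · intro k _ hk
      rw [if_neg, Polynomial.C_0, zero_mul]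
      rintro ⟨h0, -⟩
      exact hk (Fin.ext (by simpa using h0))
    · intro h
      exact absurd (Finset.mem_univ _) h
  rw [Matrix.submatrix_map, hsub,
    Matrix.map_one _ (map_zero _) (map_one _), Matrix.det_one]
  exact one_ne_zero

end genmat

/-- Generic full rank property for polynomial block matrices: the set of tuples `P`
with `rk_{F(x)} P̂(x) < d` (rank over the field of rational functions) is a proper
algebraic variety iff `d ≤ min n m`; equivalently `{P : rk_{F(x)} P̂(x) ≥ d}` is
generic iff `d ≤ min n m`. -/
theorem statement_10 (F : Type) [RCLike F]
    (p q : ℕ) (hp : 1 ≤ p) (hq : 1 ≤ q)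
    (ns : Fin p → ℕ) (ms : Fin q → ℕ)
    (hns : ∀ i, 1 ≤ ns i) (hms : ∀ j, 1 ≤ ms j)
    (g : Fin p → Fin q → ℕ) (d : ℕ) :
    (IsProperAlgVariety {x : ((ij : Fin p × Fin q) ×
        (Fin (g ij.1 ij.2 + 1) × Fin (ns ij.1) × Fin (ms ij.2))) → F |
        ((polyBlock ns ms g x).map (algebraMap (Polynomial F) (RatFunc F))).rank < d} ↔
      d ≤ min (∑ i, ns i) (∑ j, ms j)) ∧
    (IsGeneric {x : ((ij : Fin p × Fin q) ×
        (Fin (g ij.1 ij.2 + 1) × Fin (ns ij.1) × Fin (ms ij.2))) → F |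
        d ≤ ((polyBlock ns ms g x).map (algebraMap (Polynomial F) (RatFunc F))).rank} ↔
      d ≤ min (∑ i, ns i) (∑ j, ms j)) := by
  classical
  have hcR : Fintype.card ((i : Fin p) × Fin (ns i)) = ∑ i, ns i := by simp
  have hcC : Fintype.card ((j : Fin q) × Fin (ms j)) = ∑ j, ms j := by simp
  have hub : ∀ x, ((polyBlock ns ms g x).map (algebraMap (Polynomial F) (RatFunc F))).rank
      ≤ min (∑ i, ns i) (∑ j, ms j) := by
    intro x
    exact le_min ((Matrix.rank_le_card_height _).trans_eq hcR)
      ((Matrix.rank_le_card_width _).trans_eq hcC)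
  have hwit : d ≤ min (∑ i, ns i) (∑ j, ms j) →
      ∃ x : ((ij : Fin p × Fin q) ×
          (Fin (g ij.1 ij.2 + 1) × Fin (ns ij.1) × Fin (ms ij.2))) → F,
        d ≤ ((polyBlock ns ms g x).map (algebraMap (Polynomial F) (RatFunc F))).rank := by
    intro hd
    exact witness_exists ns ms g (hcR ▸ hd.trans (min_le_left _ _))
      (hcC ▸ hd.trans (min_le_right _ _))
  constructor
  · constructor
    · rintro ⟨-, hne⟩
      obtain ⟨x, hx⟩ := (Set.ne_univ_iff_exists_notMem _).1 hne
      simp only [Set.mem_setOf_eq, not_lt] at hx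
      exact hx.trans (hub x)
    · intro hd
      refine ⟨variety_rank_lt ns ms g d, ?_⟩
      obtain ⟨x, hx⟩ := hwit hd
      refine (Set.ne_univ_iff_exists_notMem _).2 ⟨x, ?_⟩
      simp only [Set.mem_setOf_eq, not_lt]
      exact hx
  · constructor
    · rintro ⟨V, hV, hVne, hsub⟩
      obtain ⟨x, hx⟩ := (Set.ne_univ_iff_exists_notMem _).1 hVne
      have hxS : x ∈ {x : ((ij : Fin p × Fin q) ×
          (Fin (g ij.1 ij.2 + 1) × Fin (ns ij.1) × Fin (ms ij.2))) → F |
          d ≤ ((polyBlock ns ms g x).map (algebraMap (Polynomial F) (RatFunc F))).rank} := by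
        by_contra h
        exact hx (hsub h)
      exact hxS.trans (hub x)
    · intro hd
      obtain ⟨x, hx⟩ := hwit hd
      refine ⟨{x : ((ij : Fin p × Fin q) ×
          (Fin (g ij.1 ij.2 + 1) × Fin (ns ij.1) × Fin (ms ij.2))) → F |
          ((polyBlock ns ms g x).map (algebraMap (Polynomial F) (RatFunc F))).rank < d},
        variety_rank_lt ns ms g d, ?_, ?_⟩
      · refine (Set.ne_univ_iff_exists_notMem _).2 ⟨x, ?_⟩
        simp only [Set.mem_setOf_eq, not_lt]
        exact hx
      · intro y hy
        simp only [Set.mem_compl_iff, Set.mem_setOf_eq, not_le] at hy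
        exact hy
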